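/- Let n ≥ 5 be odd, let r_n be the rotation matrix [[cos(π/n), −sin(π/n)], [sin(π/n), cos(π/n)]], let s_n = [[1, 2·cot(π/n)], [0, 1]], and let Γ_n be the subgroup of SL(2,ℝ) generated by {r_n, s_n}. If v ∈ ℝ² \ {0} and the orbit Γ_n·v (under the standard linear action on ℝ²) is not dense in ℝ², then v is a nonzero real scalar multiple of some vector in the orbit Γ_n·(1,0). -/

import Mathlib

/-- The rotation matrix `r_n` by angle `π/n`, as an element of `SL(2,ℝ)`. -/
noncomputable def rotMat (n : ℕ) : Matrix.SpecialLinearGroup (Fin 2) ℝ :=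
  ⟨!![Real.cos (Real.pi / n), -Real.sin (Real.pi / n);
      Real.sin (Real.pi / n), Real.cos (Real.pi / n)], by
    rw [Matrix.det_fin_two_of]; nlinarith [Real.sin_sq_add_cos_sq (Real.pi / n)]⟩

/-- The shear matrix `s_n = [[1, 2·cot(π/n)], [0, 1]]`, as an element of `SL(2,ℝ)`. -/
noncomputable def shearMat (n : ℕ) : Matrix.SpecialLinearGroup (Fin 2) ℝ :=
  ⟨!![1, 2 * Real.cot (Real.pi / n); 0, 1], by simp [Matrix.det_fin_two_of]⟩

namespace VeechAux

open Real Matrix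

abbrev SL2 : Type := Matrix.SpecialLinearGroup (Fin 2) ℝ

lemma mulVec_apply (M : Matrix (Fin 2) (Fin 2) ℝ) (u : Fin 2 → ℝ) (i : Fin 2) :
    M.mulVec u i = M i 0 * u 0 + M i 1 * u 1 := by
  simp [Matrix.mulVec, dotProduct, Fin.sum_univ_two]

lemma det_pair (M : Matrix (Fin 2) (Fin 2) ℝ) (hM : M.det = 1) (u u' : Fin 2 → ℝ) :
    M.mulVec u 0 * M.mulVec u' 1 - M.mulVec u 1 * M.mulVec u' 0
      = u 0 * u' 1 - u 1 * u' 0 := by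
  rw [Matrix.det_fin_two] at hM
  simp only [mulVec_apply]
  linear_combination (u 0 * u' 1 - u 1 * u' 0) * hM

lemma rot_pow (n : ℕ) (j : ℕ) :
    (((rotMat n) ^ j : SL2) : Matrix (Fin 2) (Fin 2) ℝ)
      = !![Real.cos (j * (Real.pi / n)), -Real.sin (j * (Real.pi / n));
           Real.sin (j * (Real.pi / n)), Real.cos (j * (Real.pi / n))] := by
  induction j with
  | zero => simp [Matrix.one_fin_two]
  | succ k ih =>
    rw [pow_succ, Matrix.SpecialLinearGroup.coe_mul, ih]
    have h : (rotMat n : Matrix (Fin 2) (Fin 2) ℝ)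
        = !![Real.cos (Real.pi / n), -Real.sin (Real.pi / n);
             Real.sin (Real.pi / n), Real.cos (Real.pi / n)] := rfl
    rw [h, Matrix.mul_fin_two]
    have hca : ((k : ℝ) + 1) * (Real.pi / n) = k * (Real.pi / n) + Real.pi / n := by ring
    ext i j'
    fin_cases i <;> fin_cases j' <;> simp [hca, Real.cos_add, Real.sin_add] <;> ring

lemma shear_inv (n : ℕ) :
    ((shearMat n)⁻¹ : SL2)
      = ⟨!![1, -(2 * Real.cot (Real.pi / n)); 0, 1], by simp [Matrix.det_fin_two_of]⟩ := by
  apply inv_eq_of_mul_eq_one_right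
  apply Subtype.ext
  change (shearMat n : Matrix (Fin 2) (Fin 2) ℝ) * !![1, -(2 * Real.cot (Real.pi / n)); 0, 1] = 1
  show (!![1, 2 * Real.cot (Real.pi / n); 0, 1] : Matrix (Fin 2) (Fin 2) ℝ) * _ = _
  rw [Matrix.mul_fin_two]
  ext i j' <;> fin_cases i <;> fin_cases j' <;> simp [Matrix.one_fin_two] <;> ring

lemma shear_zpow (n : ℕ) (m : ℤ) :
    (((shearMat n) ^ m : SL2) : Matrix (Fin 2) (Fin 2) ℝ)
      = !![1, 2 * Real.cot (Real.pi / n) * m; 0, 1] := by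
  induction m using Int.induction_on with
  | zero => simp [Matrix.one_fin_two]
  | succ k ih =>
    rw [_root_.zpow_add_one, Matrix.SpecialLinearGroup.coe_mul, ih]
    show _ * (!![1, 2 * Real.cot (Real.pi / n); 0, 1] : Matrix (Fin 2) (Fin 2) ℝ) = _
    rw [Matrix.mul_fin_two]
    ext i j' <;> fin_cases i <;> fin_cases j' <;> simp <;> push_cast <;> ring
  | pred k ih =>
    rw [_root_.zpow_sub_one, Matrix.SpecialLinearGroup.coe_mul, ih, shear_inv]
    show _ * (!![1, -(2 * Real.cot (Real.pi / n)); 0, 1] : Matrix (Fin 2) (Fin 2) ℝ) = _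
    rw [Matrix.mul_fin_two]
    ext i j' <;> fin_cases i <;> fin_cases j' <;> simp <;> push_cast <;> ring

lemma rot_mem (n : ℕ) : rotMat n ∈ Subgroup.closure {rotMat n, shearMat n} :=
  Subgroup.subset_closure (Set.mem_insert _ _)

lemma shear_mem (n : ℕ) : shearMat n ∈ Subgroup.closure {rotMat n, shearMat n} :=
  Subgroup.subset_closure (Set.mem_insert_of_mem _ rfl)

lemma round_bound (C x : ℝ) (hC : C ≠ 0) : |x - round (x / C) * C| ≤ |C| / 2 := by
  have h := abs_sub_round (x / C)
  have he : x - round (x / C) * C = C * (x / C - round (x / C)) := by field_simp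
  rw [he, abs_mul]
  calc |C| * |x / C - (round (x / C) : ℝ)| ≤ |C| * (1 / 2) := by
        exact mul_le_mul_of_nonneg_left h (abs_nonneg C)
    _ = |C| / 2 := by ring


section Trig

variable {n : ℕ}

lemma npos (hn : 5 ≤ n) : (0:ℝ) < n := by
  have : (5:ℝ) ≤ n := by exact_mod_cast hn
  linarith

lemma a_pos (hn : 5 ≤ n) : 0 < Real.pi / n :=
  div_pos Real.pi_pos (npos hn)

lemma a_le_one (hn : 5 ≤ n) : Real.pi / n ≤ 1 := by
  have h1 : (5:ℝ) ≤ n := by exact_mod_cast hn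
  rw [div_le_one (npos hn)]
  linarith [Real.pi_le_four]

lemma a_lt_pi (hn : 5 ≤ n) : Real.pi / n < Real.pi := by
  have := a_le_one hn
  linarith [Real.pi_gt_three]

lemma sin_a_pos (hn : 5 ≤ n) : 0 < Real.sin (Real.pi / n) :=
  Real.sin_pos_of_pos_of_lt_pi (a_pos hn) (a_lt_pi hn)

lemma cos_a_pos (hn : 5 ≤ n) : 0 < Real.cos (Real.pi / n) := by
  apply Real.cos_pos_of_mem_Ioo
  constructor
  · linarith [a_pos hn, Real.pi_pos]
  · have := a_le_one hn
    linarith [Real.pi_gt_three]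

lemma mu_pos (hn : 5 ≤ n) : 0 < Real.cot (Real.pi / n) := by
  rw [Real.cot_eq_cos_div_sin]
  exact div_pos (cos_a_pos hn) (sin_a_pos hn)

lemma sin_a_ge (hn : 5 ≤ n) : 3 / 4 * (Real.pi / n) ≤ Real.sin (Real.pi / n) := by
  have h0 := a_pos hn
  have h1 := a_le_one hn
  have h2 := Real.sin_gt_sub_cube h0
  nlinarith [sq_nonneg (Real.pi / n)]

lemma one_add_mu_sq (hn : 5 ≤ n) :
    1 + Real.cot (Real.pi / n) ^ 2 = (1 / Real.sin (Real.pi / n)) ^ 2 := by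
  have hs := sin_a_pos hn
  rw [Real.cot_eq_cos_div_sin]
  field_simp
  exact Real.sin_sq_add_cos_sq _

end Trig

lemma key_step {n : ℕ} (hn : 5 ≤ n) (u : Fin 2 → ℝ) (hu : u 1 ≠ 0) :
    ∃ γ : SL2, γ ∈ Subgroup.closure {rotMat n, shearMat n} ∧
      |((γ : Matrix (Fin 2) (Fin 2) ℝ).mulVec u) 1| ≤ 2 / 3 * |u 1| := by
  set a : ℝ := Real.pi / n with ha
  have ha0 : 0 < a := a_pos hn
  have hs : 0 < Real.sin a := sin_a_pos hn
  set μ : ℝ := Real.cot a with hμdef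
  have hμ0 : 0 < μ := mu_pos hn
  -- shear normalization
  have hC : 2 * μ * u 1 ≠ 0 := by
    intro h
    rcases mul_eq_zero.1 h with h' | h'
    · rcases mul_eq_zero.1 h' with h'' | h'' <;> [norm_num at h''; exact hμ0.ne' h'']
    · exact hu h'
  set m : ℤ := -round (u 0 / (2 * μ * u 1)) with hm
  set x : ℝ := u 0 + 2 * μ * m * u 1 with hx
  have hxb : |x| ≤ μ * |u 1| := by
    have h := round_bound (2 * μ * u 1) (u 0) hC
    have he : x = u 0 - round (u 0 / (2 * μ * u 1)) * (2 * μ * u 1) := by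
      rw [hx, hm]; push_cast; ring
    rw [he]
    calc |u 0 - round (u 0 / (2 * μ * u 1)) * (2 * μ * u 1)| ≤ |2 * μ * u 1| / 2 := h
      _ = μ * |u 1| := by
          rw [abs_mul, abs_mul, abs_of_pos (by norm_num : (0:ℝ) < 2), abs_of_pos hμ0]
          ring
  -- angle
  set φ : ℝ := Real.arctan (x / u 1) with hφ
  have hcosφ : Real.sin a ≤ Real.cos φ := by
    rw [hφ, Real.cos_arctan]
    have ht : (x / u 1) ^ 2 ≤ μ ^ 2 := by
      have h1 : |x / u 1| ≤ μ := by
        rw [abs_div]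
        rw [div_le_iff₀ (abs_pos.2 hu)]
        linarith [hxb]
      nlinarith [abs_nonneg (x / u 1), sq_abs (x / u 1)]
    have h2 : Real.sqrt (1 + (x / u 1) ^ 2) ≤ 1 / Real.sin a := by
      rw [show (1:ℝ) / Real.sin a = Real.sqrt ((1 / Real.sin a) ^ 2) by
        rw [Real.sqrt_sq (by positivity)]]
      apply Real.sqrt_le_sqrt
      rw [← one_add_mu_sq hn]
      linarith
    rw [le_div_iff₀ (by positivity)]
    have h3 : Real.sin a * Real.sqrt (1 + (x / u 1) ^ 2)
        ≤ Real.sin a * (1 / Real.sin a) := mul_le_mul_of_nonneg_left h2 hs.le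
    rw [mul_one_div, div_self hs.ne'] at h3
    exact h3
  have hcosφ0 : 0 < Real.cos φ := lt_of_lt_of_le hs hcosφ
  have hxt : x = u 1 * Real.tan φ := by
    rw [hφ, Real.tan_arctan]
    field_simp
  -- choose j, K
  set c : ℝ := φ + Real.pi / 2 with hcdef
  set j' : ℤ := round (c / a) with hj'
  have hδb : |(j' : ℝ) * a - c| ≤ a / 2 := by
    have h := round_bound a c ha0.ne'
    have : |c - round (c / a) * a| ≤ |a| / 2 := h
    rw [abs_of_pos ha0] at this
    rw [show (j' : ℝ) * a - c = -(c - round (c / a) * a) by rw [hj']; ring, abs_neg]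
    exact this
  have hn0 : (0:ℤ) < (n:ℤ) := by exact_mod_cast (by omega : 0 < n)
  set K : ℤ := j' / n with hK
  set j : ℕ := (j' % n).toNat with hj
  have hjsplit : (j : ℝ) * a + (K : ℝ) * Real.pi = (j' : ℝ) * a := by
    have h1 : ((j : ℤ) : ℝ) = ((j' % n : ℤ) : ℝ) := by
      rw [hj]; norm_cast
      exact Int.toNat_of_nonneg (Int.emod_nonneg j' hn0.ne')
    have h2 : ((n : ℤ) : ℝ) * (K : ℝ) + ((j' % n : ℤ) : ℝ) = (j' : ℝ) := by
      rw [hK]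
      exact_mod_cast congrArg (fun z : ℤ => (z : ℝ)) (Int.mul_ediv_add_emod j' (n:ℤ))
    have hna : (n : ℝ) * a = Real.pi := by
      rw [ha]; field_simp
    push_cast at h1 h2
    rw [← hna]
    linear_combination a * h1 + a * h2
  set δ : ℝ := (j' : ℝ) * a - c with hδ
  refine ⟨(rotMat n) ^ j * (shearMat n) ^ m,
    mul_mem (pow_mem (rot_mem n) j) (zpow_mem (shear_mem n) m), ?_⟩
  -- compute second coordinate
  have hsv : (((shearMat n) ^ m : SL2) : Matrix (Fin 2) (Fin 2) ℝ).mulVec u = ![x, u 1] := by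
    rw [shear_zpow, ← ha, ← hμdef]
    funext i
    fin_cases i <;> simp [mulVec_apply, hx] <;> ring
  have hy' : ((((rotMat n) ^ j * (shearMat n) ^ m : SL2)) : Matrix (Fin 2) (Fin 2) ℝ).mulVec u 1
      = Real.sin ((j:ℝ) * a) * x + Real.cos ((j:ℝ) * a) * u 1 := by
    rw [Matrix.SpecialLinearGroup.coe_mul, ← Matrix.mulVec_mulVec, hsv, rot_pow]
    simp [mulVec_apply, ha]
  rw [hy']
  -- identity
  have hid : Real.sin ((j:ℝ) * a) * x + Real.cos ((j:ℝ) * a) * u 1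
      = u 1 * Real.cos ((j:ℝ) * a - φ) / Real.cos φ := by
    rw [hxt, Real.cos_sub, Real.tan_eq_sin_div_cos]
    field_simp
    ring
  rw [hid]
  -- bound |cos(ja − φ)|
  have hang : (j : ℝ) * a - φ = δ + Real.pi / 2 - (K : ℝ) * Real.pi := by
    rw [hδ, hcdef]
    linarith [hjsplit]
  have hcb : |Real.cos ((j:ℝ) * a - φ)| ≤ a / 2 := by
    rw [hang, Real.cos_sub, Real.sin_int_mul_pi, mul_zero, add_zero, abs_mul]
    have h1 : Real.cos (δ + Real.pi / 2) = -Real.sin δ := by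
      rw [Real.cos_add]; simp
    rw [h1, abs_neg]
    calc |Real.sin δ| * |Real.cos ((K:ℝ) * Real.pi)|
        ≤ |Real.sin δ| * 1 := by
          exact mul_le_mul_of_nonneg_left (Real.abs_cos_le_one _) (abs_nonneg _)
      _ = |Real.sin δ| := mul_one _
      _ ≤ |δ| := Real.abs_sin_le_abs
      _ ≤ a / 2 := hδb
  -- finish
  have hfin : |u 1 * Real.cos ((j:ℝ) * a - φ) / Real.cos φ|
      ≤ |u 1| * (a / 2) / Real.sin a := by
    rw [abs_div, abs_mul, abs_of_pos hcosφ0]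
    apply div_le_div₀ (by positivity) (mul_le_mul_of_nonneg_left hcb (abs_nonneg _)) hs hcosφ
  have hnum : |u 1| * (a / 2) / Real.sin a ≤ 2 / 3 * |u 1| := by
    have hsa := sin_a_ge hn
    rw [div_le_iff₀ hs]
    nlinarith [abs_nonneg (u 1)]
  linarith


lemma shrink {n : ℕ} (hn : 5 ≤ n) (u : Fin 2 → ℝ) (k : ℕ) :
    ∃ γ : SL2, γ ∈ Subgroup.closure {rotMat n, shearMat n} ∧
      |((γ : Matrix (Fin 2) (Fin 2) ℝ).mulVec u) 1| ≤ (2/3 : ℝ) ^ k * |u 1| := by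
  induction k with
  | zero =>
    refine ⟨1, one_mem _, ?_⟩
    rw [Matrix.SpecialLinearGroup.coe_one, Matrix.one_mulVec]
    simp
  | succ k ih =>
    obtain ⟨γ, hγ, hb⟩ := ih
    by_cases h0 : ((γ : Matrix (Fin 2) (Fin 2) ℝ).mulVec u) 1 = 0
    · refine ⟨γ, hγ, ?_⟩
      rw [h0, abs_zero]
      positivity
    · obtain ⟨γ', hγ', hb'⟩ := key_step hn ((γ : Matrix (Fin 2) (Fin 2) ℝ).mulVec u) h0
      refine ⟨γ' * γ, mul_mem hγ' hγ, ?_⟩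
      rw [Matrix.SpecialLinearGroup.coe_mul, ← Matrix.mulVec_mulVec]
      calc |((γ' : Matrix (Fin 2) (Fin 2) ℝ).mulVec
              ((γ : Matrix (Fin 2) (Fin 2) ℝ).mulVec u)) 1|
          ≤ 2/3 * |((γ : Matrix (Fin 2) (Fin 2) ℝ).mulVec u) 1| := hb'
        _ ≤ 2/3 * ((2/3 : ℝ) ^ k * |u 1|) := by
            apply mul_le_mul_of_nonneg_left hb (by norm_num)
        _ = (2/3 : ℝ) ^ (k + 1) * |u 1| := by ring

lemma shrink_lt {n : ℕ} (hn : 5 ≤ n) (u : Fin 2 → ℝ) (ε : ℝ) (hε : 0 < ε) :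
    ∃ γ : SL2, γ ∈ Subgroup.closure {rotMat n, shearMat n} ∧
      |((γ : Matrix (Fin 2) (Fin 2) ℝ).mulVec u) 1| < ε := by
  have hB : (0:ℝ) < |u 1| + 1 := by positivity
  obtain ⟨k, hk⟩ := exists_pow_lt_of_lt_one (show (0:ℝ) < ε / (|u 1| + 1) by positivity)
    (by norm_num : (2/3 : ℝ) < 1)
  obtain ⟨γ, hγ, hb⟩ := shrink hn u k
  refine ⟨γ, hγ, lt_of_le_of_lt hb ?_⟩
  have h2 : (2/3 : ℝ) ^ k * (|u 1| + 1) < ε := (lt_div_iff₀ hB).1 hk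
  nlinarith [pow_nonneg (by norm_num : (0:ℝ) ≤ 2/3) k, abs_nonneg (u 1)]

lemma proj_approx (q w : Fin 2 → ℝ) (c₀ : ℝ) (hc₀ : 0 < c₀)
    (hN : c₀ ≤ |q 0| + |q 1|) :
    ∃ t₀ : ℝ, ∀ i, |t₀ * q i - w i| ≤ 2 * |q 0 * w 1 - q 1 * w 0| / c₀ := by
  set D : ℝ := q 0 ^ 2 + q 1 ^ 2 with hD
  have hD0 : 0 < D := by
    nlinarith [sq_abs (q 0), sq_abs (q 1), sq_nonneg (|q 0| - |q 1|), hc₀, hN,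
      mul_pos hc₀ hc₀]
  refine ⟨(w 0 * q 0 + w 1 * q 1) / D, ?_⟩
  set d : ℝ := q 0 * w 1 - q 1 * w 0 with hd
  have key : ∀ s : ℝ, |s| ≤ |q 0| + |q 1| → |s * d / D| ≤ 2 * |d| / c₀ := by
    intro s hs
    rw [abs_div, abs_mul, abs_of_pos hD0, div_le_div_iff₀ hD0 hc₀]
    have h2 : (|q 0| + |q 1|) * c₀ ≤ 2 * D := by
      nlinarith [sq_abs (q 0), sq_abs (q 1), sq_nonneg (|q 0| - |q 1|)]
    nlinarith [abs_nonneg d, abs_nonneg s, abs_nonneg (q 0), abs_nonneg (q 1),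
      mul_le_mul_of_nonneg_right hs (abs_nonneg d)]
  intro i
  fin_cases i
  · have hident : (w 0 * q 0 + w 1 * q 1) / D * q 0 - w 0 = q 1 * d / D := by
      field_simp
      ring
    calc |(w 0 * q 0 + w 1 * q 1) / D * q 0 - w 0| = |q 1 * d / D| := by rw [hident]
      _ ≤ 2 * |d| / c₀ := key (q 1) (by linarith [abs_nonneg (q 0)])
  · have hident : (w 0 * q 0 + w 1 * q 1) / D * q 1 - w 1 = -q 0 * d / D := by
      field_simp
      ring
    calc |(w 0 * q 0 + w 1 * q 1) / D * q 1 - w 1| = |(-q 0) * d / D| := by rw [hident]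
      _ ≤ 2 * |d| / c₀ := key (-q 0) (by rw [abs_neg]; linarith [abs_nonneg (q 1)])


lemma rot_e1 {n : ℕ} :
    ((rotMat n : SL2) : Matrix (Fin 2) (Fin 2) ℝ).mulVec ![1, 0]
      = ![Real.cos (Real.pi / n), Real.sin (Real.pi / n)] := by
  funext i
  have h : (rotMat n : Matrix (Fin 2) (Fin 2) ℝ)
      = !![Real.cos (Real.pi / n), -Real.sin (Real.pi / n);
           Real.sin (Real.pi / n), Real.cos (Real.pi / n)] := rfl
  rw [h]
  fin_cases i <;> simp [mulVec_apply]

lemma choose_big (q0 q1 : Fin 2 → ℝ) (c₀ sa : ℝ) (hc₀ : 0 < c₀) (hc2 : c₀ ^ 2 = sa)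
    (hdet : q0 0 * q1 1 - q0 1 * q1 0 = sa) :
    c₀ ≤ |q0 0| + |q0 1| ∨ c₀ ≤ |q1 0| + |q1 1| := by
  by_contra hcon
  push_neg at hcon
  have e1 : q0 0 * q1 1 ≤ |q0 0| * |q1 1| := by
    rw [← abs_mul]; exact le_abs_self _
  have e2 : -(q0 1 * q1 0) ≤ |q0 1| * |q1 0| := by
    rw [← abs_mul]; exact neg_le_abs _
  have hN0 : (0:ℝ) ≤ |q0 0| + |q0 1| := by positivity
  have hp : (|q0 0| + |q0 1|) * (|q1 0| + |q1 1|) < c₀ * c₀ :=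
    mul_lt_mul'' hcon.1 hcon.2 hN0 (by positivity)
  have hup : sa ≤ (|q0 0| + |q0 1|) * (|q1 0| + |q1 1|) := by
    nlinarith [e1, e2, mul_nonneg (abs_nonneg (q0 0)) (abs_nonneg (q1 0)),
      mul_nonneg (abs_nonneg (q0 1)) (abs_nonneg (q1 1)), hdet]
  nlinarith

lemma final_bound (B c₀ μ ε : ℝ) (hc₀ : 0 < c₀) (hμ0 : 0 < μ) (hε : 0 < ε)
    (hB : |B| < (1 + μ) * (ε * c₀ / (4 * (1 + μ)))) : 2 * |B| / c₀ < ε := by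
  have h1μ : (0:ℝ) < 1 + μ := by linarith
  have he : (1 + μ) * (ε * c₀ / (4 * (1 + μ))) = ε * c₀ / 4 := by
    field_simp
  rw [he] at hB
  rw [div_lt_iff₀ hc₀]
  nlinarith [abs_nonneg B]

lemma line_approx {n : ℕ} (hn : 5 ≤ n) (w : Fin 2 → ℝ) (ε : ℝ) (hε : 0 < ε) :
    ∃ g : SL2, g ∈ Subgroup.closure {rotMat n, shearMat n} ∧ ∃ t₀ : ℝ,
      ∀ i, |t₀ * ((g : Matrix (Fin 2) (Fin 2) ℝ).mulVec ![1, 0]) i - w i| < ε := by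
  set a : ℝ := Real.pi / n with ha
  have hs : 0 < Real.sin a := sin_a_pos hn
  set μ : ℝ := Real.cot a with hμ
  have hμ0 : 0 < μ := mu_pos hn
  set c₀ : ℝ := Real.sqrt (Real.sin a) with hc₀def
  have hc₀ : 0 < c₀ := Real.sqrt_pos.2 hs
  have hc₀2 : c₀ ^ 2 = Real.sin a := Real.sq_sqrt hs.le
  have h1μ : (0:ℝ) < 4 * (1 + μ) := by nlinarith
  set η : ℝ := ε * c₀ / (4 * (1 + μ)) with hη
  have hη0 : 0 < η := div_pos (mul_pos hε hc₀) h1μ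
  obtain ⟨h, hh, hz2⟩ := shrink_lt hn w η hη0
  set z : Fin 2 → ℝ := ((h : SL2) : Matrix (Fin 2) (Fin 2) ℝ).mulVec w with hz
  have hrec : ∀ h' : SL2, ((h'⁻¹ : SL2) : Matrix (Fin 2) (Fin 2) ℝ).mulVec
      (((h' : SL2) : Matrix (Fin 2) (Fin 2) ℝ).mulVec w) = w := by
    intro h'
    rw [Matrix.mulVec_mulVec, ← Matrix.SpecialLinearGroup.coe_mul, inv_mul_cancel,
      Matrix.SpecialLinearGroup.coe_one, Matrix.one_mulVec]
  by_cases hz1 : z 1 = 0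
  · refine ⟨h⁻¹, inv_mem hh, z 0, ?_⟩
    intro i
    have hwz : w = ((h⁻¹ : SL2) : Matrix (Fin 2) (Fin 2) ℝ).mulVec z := (hrec h).symm
    have h1 : w i = z 0 * ((h⁻¹ : SL2) : Matrix (Fin 2) (Fin 2) ℝ).mulVec ![1, 0] i := by
      conv_lhs => rw [hwz]
      rw [mulVec_apply, mulVec_apply]
      simp [hz1]
      ring
    rw [← h1]
    simpa using hε
  · -- normalization step
    have hC : 2 * μ * z 1 ≠ 0 := by
      intro hcon
      rcases mul_eq_zero.1 hcon with h' | h'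
      · rcases mul_eq_zero.1 h' with h'' | h''
        · norm_num at h''
        · exact hμ0.ne' h''
      · exact hz1 h'
    set m : ℤ := -round (z 0 / (2 * μ * z 1)) with hm
    set h' : SL2 := (shearMat n) ^ m * h with hh'
    have hh'mem : h' ∈ Subgroup.closure {rotMat n, shearMat n} :=
      mul_mem (zpow_mem (shear_mem n) m) hh
    set z' : Fin 2 → ℝ := ((h' : SL2) : Matrix (Fin 2) (Fin 2) ℝ).mulVec w with hz'
    have hz'e : z' = ![z 0 + 2 * μ * m * z 1, z 1] := by
      rw [hz', hh', Matrix.SpecialLinearGroup.coe_mul, ← Matrix.mulVec_mulVec, ← hz,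
        shear_zpow, ← ha, ← hμ]
      funext i
      fin_cases i <;> simp [mulVec_apply] <;> ring
    have hz'1 : z' 1 = z 1 := by rw [hz'e]; simp
    have hz'0 : |z' 0| ≤ μ * |z 1| := by
      rw [hz'e]
      show |z 0 + 2 * μ * m * z 1| ≤ μ * |z 1|
      have hrb := round_bound (2 * μ * z 1) (z 0) hC
      have he : z 0 + 2 * μ * m * z 1
          = z 0 - round (z 0 / (2 * μ * z 1)) * (2 * μ * z 1) := by
        rw [hm]; push_cast; ring
      rw [he]
      calc |z 0 - round (z 0 / (2 * μ * z 1)) * (2 * μ * z 1)| ≤ |2 * μ * z 1| / 2 := hrb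
        _ = μ * |z 1| := by
            rw [abs_mul, abs_mul, abs_of_pos (by norm_num : (0:ℝ) < 2), abs_of_pos hμ0]
            ring
    have hdetA : ((h'⁻¹ : SL2) : Matrix (Fin 2) (Fin 2) ℝ).det = 1 := (h'⁻¹ : SL2).prop
    have hwA : ((h'⁻¹ : SL2) : Matrix (Fin 2) (Fin 2) ℝ).mulVec z' = w := hrec h'
    set A : Matrix (Fin 2) (Fin 2) ℝ := ((h'⁻¹ : SL2) : Matrix (Fin 2) (Fin 2) ℝ) with hA
    set q0 : Fin 2 → ℝ := A.mulVec ![1, 0] with hq0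
    set q1 : Fin 2 → ℝ := A.mulVec ![Real.cos a, Real.sin a] with hq1
    have hdet01 : q0 0 * q1 1 - q0 1 * q1 0 = Real.sin a := by
      have hdp := det_pair A hdetA ![1, 0] ![Real.cos a, Real.sin a]
      rw [← hq0, ← hq1] at hdp
      simpa using hdp
    have hd0 : q0 0 * w 1 - q0 1 * w 0 = z' 1 := by
      have hdp := det_pair A hdetA ![1, 0] z'
      rw [← hq0, hwA] at hdp
      simpa using hdp
    have hd1 : q1 0 * w 1 - q1 1 * w 0 = Real.cos a * z' 1 - Real.sin a * z' 0 := by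
      have hdp := det_pair A hdetA ![Real.cos a, Real.sin a] z'
      rw [← hq1, hwA] at hdp
      simpa using hdp
    have hge0 : ((h'⁻¹ : SL2) : Matrix (Fin 2) (Fin 2) ℝ).mulVec ![1, 0] = q0 := by
      rw [hq0]
    have hge1 : ((h'⁻¹ * rotMat n : SL2) : Matrix (Fin 2) (Fin 2) ℝ).mulVec ![1, 0]
        = q1 := by
      rw [Matrix.SpecialLinearGroup.coe_mul, ← Matrix.mulVec_mulVec, rot_e1, hq1, hA, ha]
    clear_value z z' h' A q0 q1
    have hz1b : |z 1| < η := hz2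
    have hd0b : |q0 0 * w 1 - q0 1 * w 0| < (1 + μ) * η := by
      rw [hd0, hz'1]
      nlinarith [abs_nonneg (z 1)]
    have hd1b : |q1 0 * w 1 - q1 1 * w 0| < (1 + μ) * η := by
      rw [hd1]
      have hb1 : |Real.cos a * z' 1 - Real.sin a * z' 0|
          ≤ |z' 1| + |z' 0| := by
        calc |Real.cos a * z' 1 - Real.sin a * z' 0|
            ≤ |Real.cos a * z' 1| + |Real.sin a * z' 0| := abs_sub _ _
          _ ≤ |z' 1| + |z' 0| := by
              rw [abs_mul, abs_mul]
              have := Real.abs_cos_le_one a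
              have := Real.abs_sin_le_one a
              nlinarith [abs_nonneg (z' 1), abs_nonneg (z' 0)]
      calc |Real.cos a * z' 1 - Real.sin a * z' 0| ≤ |z' 1| + |z' 0| := hb1
        _ = |z 1| + |z' 0| := by rw [hz'1]
        _ ≤ |z 1| + μ * |z 1| := by linarith [hz'0]
        _ = (1 + μ) * |z 1| := by ring
        _ < (1 + μ) * η := by nlinarith
    have hchoice : c₀ ≤ |q0 0| + |q0 1| ∨ c₀ ≤ |q1 0| + |q1 1| :=
      choose_big q0 q1 c₀ (Real.sin a) hc₀ hc₀2 hdet01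
    have hfinal : ∀ B : ℝ, |B| < (1 + μ) * η → 2 * |B| / c₀ < ε := by
      intro B hB
      exact final_bound B c₀ μ ε hc₀ hμ0 hε (by rw [← hη]; exact hB)
    rcases hchoice with hch | hch
    · obtain ⟨t₀, ht₀⟩ := proj_approx q0 w c₀ hc₀ hch
      refine ⟨h'⁻¹, inv_mem hh'mem, t₀, ?_⟩
      intro i
      rw [hge0]
      calc |t₀ * q0 i - w i|
          ≤ 2 * |q0 0 * w 1 - q0 1 * w 0| / c₀ := ht₀ i
        _ < ε := hfinal _ hd0b
    · obtain ⟨t₀, ht₀⟩ := proj_approx q1 w c₀ hc₀ hch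
      refine ⟨h'⁻¹ * rotMat n, mul_mem (inv_mem hh'mem) (rot_mem n), t₀, ?_⟩
      intro i
      rw [hge1]
      calc |t₀ * q1 i - w i|
          ≤ 2 * |q1 0 * w 1 - q1 1 * w 0| / c₀ := ht₀ i
        _ < ε := hfinal _ hd1b


lemma orbit_close {n : ℕ} (hn : 5 ≤ n) (v : Fin 2 → ℝ)
    (Hne : ∀ γ : SL2, γ ∈ Subgroup.closure {rotMat n, shearMat n} →
      ((γ : Matrix (Fin 2) (Fin 2) ℝ).mulVec v) 1 ≠ 0)
    (w : Fin 2 → ℝ) (ε : ℝ) (hε : 0 < ε) :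
    ∃ A : SL2, A ∈ Subgroup.closure {rotMat n, shearMat n} ∧
      ∀ i, |((A : Matrix (Fin 2) (Fin 2) ℝ).mulVec v) i - w i| < ε := by
  set μ : ℝ := Real.cot (Real.pi / n) with hμ
  have hμ0 : 0 < μ := mu_pos hn
  obtain ⟨g, hg, t₀, hline⟩ := line_approx hn w (ε / 2) (by positivity)
  set q : Fin 2 → ℝ := ((g : SL2) : Matrix (Fin 2) (Fin 2) ℝ).mulVec ![1, 0] with hq
  set q' : Fin 2 → ℝ := ((g : SL2) : Matrix (Fin 2) (Fin 2) ℝ).mulVec ![0, 1] with hq'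
  set Q : ℝ := 1 + |q 0| + |q 1| + |q' 0| + |q' 1| with hQ
  have hQ0 : 0 < Q := by positivity
  have hden : (0:ℝ) < 2 * (1 + μ) * Q :=
    mul_pos (mul_pos (by norm_num) (by linarith)) hQ0
  obtain ⟨γ, hγ, hy⟩ := shrink_lt hn v (ε / (2 * (1 + μ) * Q)) (div_pos hε hden)
  set x : ℝ := ((γ : Matrix (Fin 2) (Fin 2) ℝ).mulVec v) 0 with hx
  set y : ℝ := ((γ : Matrix (Fin 2) (Fin 2) ℝ).mulVec v) 1 with hyy
  have hy0 : y ≠ 0 := Hne γ hγ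
  have hC : 2 * μ * y ≠ 0 := by
    intro hcon
    rcases mul_eq_zero.1 hcon with h' | h'
    · rcases mul_eq_zero.1 h' with h'' | h''
      · norm_num at h''
      · exact hμ0.ne' h''
    · exact hy0 h'
  set m : ℤ := -round ((x - t₀) / (2 * μ * y)) with hm
  set t : ℝ := x + 2 * μ * m * y with ht
  have htb : |t - t₀| ≤ μ * |y| := by
    have hrb := round_bound (2 * μ * y) (x - t₀) hC
    have he : t - t₀ = (x - t₀) - round ((x - t₀) / (2 * μ * y)) * (2 * μ * y) := by
      rw [ht, hm]; push_cast; ring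
    rw [he]
    calc |(x - t₀) - round ((x - t₀) / (2 * μ * y)) * (2 * μ * y)|
        ≤ |2 * μ * y| / 2 := hrb
      _ = μ * |y| := by
          rw [abs_mul, abs_mul, abs_of_pos (by norm_num : (0:ℝ) < 2), abs_of_pos hμ0]
          ring
  refine ⟨g * (shearMat n) ^ m * γ, mul_mem (mul_mem hg (zpow_mem (shear_mem n) m)) hγ, ?_⟩
  have hP : ((g * (shearMat n) ^ m * γ : SL2) : Matrix (Fin 2) (Fin 2) ℝ).mulVec v
      = fun i => t * q i + y * q' i := by
    rw [Matrix.SpecialLinearGroup.coe_mul, Matrix.SpecialLinearGroup.coe_mul,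
      ← Matrix.mulVec_mulVec, ← Matrix.mulVec_mulVec]
    have h1 : ((shearMat n ^ m : SL2) : Matrix (Fin 2) (Fin 2) ℝ).mulVec
        ((γ : Matrix (Fin 2) (Fin 2) ℝ).mulVec v) = ![t, y] := by
      rw [shear_zpow, ← hμ]
      funext i
      fin_cases i <;> simp [mulVec_apply, ht, hx, hyy] <;> ring
    rw [h1]
    funext i
    have e0 : q i = (g : Matrix (Fin 2) (Fin 2) ℝ) i 0 := by
      rw [hq, mulVec_apply]; simp
    have e1 : q' i = (g : Matrix (Fin 2) (Fin 2) ℝ) i 1 := by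
      rw [hq', mulVec_apply]; simp
    rw [mulVec_apply, e0, e1]
    simp
    ring
  intro i
  rw [hP]
  clear_value μ q q' Q x y m t
  have h2 := hline i
  have h3 : |t * q i + y * q' i - w i|
      ≤ |t - t₀| * |q i| + |y| * |q' i| + |t₀ * q i - w i| := by
    have hre : t * q i + y * q' i - w i
        = ((t - t₀) * q i + y * q' i) + (t₀ * q i - w i) := by ring
    rw [hre]
    calc |((t - t₀) * q i + y * q' i) + (t₀ * q i - w i)|
        ≤ |(t - t₀) * q i + y * q' i| + |t₀ * q i - w i| := abs_add_le _ _
      _ ≤ |(t - t₀) * q i| + |y * q' i| + |t₀ * q i - w i| := by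
          linarith [abs_add_le ((t - t₀) * q i) (y * q' i)]
      _ = |t - t₀| * |q i| + |y| * |q' i| + |t₀ * q i - w i| := by
          rw [abs_mul, abs_mul]
  have hbq2 : ∀ j : Fin 2, |q j| ≤ Q ∧ |q' j| ≤ Q := by
    rw [Fin.forall_fin_two]
    refine ⟨⟨?_, ?_⟩, ⟨?_, ?_⟩⟩ <;> rw [hQ] <;>
      linarith [abs_nonneg (q 0), abs_nonneg (q 1), abs_nonneg (q' 0), abs_nonneg (q' 1)]
  have hbq : |q i| ≤ Q := (hbq2 i).1
  have hbq' : |q' i| ≤ Q := (hbq2 i).2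
  have h4 : |t - t₀| * |q i| ≤ μ * |y| * Q := by
    apply mul_le_mul htb hbq (abs_nonneg _) (by positivity)
  have h5 : |y| * |q' i| ≤ |y| * Q := mul_le_mul_of_nonneg_left hbq' (abs_nonneg y)
  have h7 : μ * |y| * Q + |y| * Q < ε / 2 := by
    have h8 : |y| * (2 * (1 + μ) * Q) < ε := (lt_div_iff₀ hden).1 hy
    nlinarith [hQ0, hμ0, abs_nonneg y]
  have hfin : |t * q i + y * q' i - w i| < ε := lt_of_le_of_lt h3 (by linarith)
  exact hfin

end VeechAux


/-- For odd `n ≥ 5`, let `Γ_n ≤ SL(2,ℝ)` be generated by `r_n` and `s_n` (the Veech group of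
the double `n`-gon surface). If `v ∈ ℝ² \ {0}` has non-dense `Γ_n`-orbit under the standard
linear action on `ℝ²`, then `v` is a nonzero scalar multiple of a vector in `Γ_n · (1,0)`. -/
theorem non_dense_orbit_odd (n : ℕ) (hn : 5 ≤ n) (hodd : Odd n) (v : Fin 2 → ℝ) (hv : v ≠ 0)
    (hnd : ¬ Dense {w : Fin 2 → ℝ | ∃ A ∈ Subgroup.closure {rotMat n, shearMat n},
      w = Matrix.mulVec (A : Matrix (Fin 2) (Fin 2) ℝ) v}) :
    ∃ (c : ℝ) (A : Matrix.SpecialLinearGroup (Fin 2) ℝ), c ≠ 0 ∧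
      A ∈ Subgroup.closure {rotMat n, shearMat n} ∧
      v = c • Matrix.mulVec (A : Matrix (Fin 2) (Fin 2) ℝ) ![1, 0] := by
  classical
  by_cases H : ∃ γ : VeechAux.SL2, γ ∈ Subgroup.closure {rotMat n, shearMat n} ∧
      ((γ : Matrix (Fin 2) (Fin 2) ℝ).mulVec v) 1 = 0
  · obtain ⟨γ, hγ, h0⟩ := H
    set c : ℝ := ((γ : Matrix (Fin 2) (Fin 2) ℝ).mulVec v) 0 with hc
    have hrecv : ((γ⁻¹ : VeechAux.SL2) : Matrix (Fin 2) (Fin 2) ℝ).mulVec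
        (((γ : VeechAux.SL2) : Matrix (Fin 2) (Fin 2) ℝ).mulVec v) = v := by
      rw [Matrix.mulVec_mulVec, ← Matrix.SpecialLinearGroup.coe_mul, inv_mul_cancel,
        Matrix.SpecialLinearGroup.coe_one, Matrix.one_mulVec]
    have hγv : ((γ : Matrix (Fin 2) (Fin 2) ℝ).mulVec v) = c • ![1, 0] := by
      funext i
      fin_cases i <;> simp [h0, hc]
    have hcne : c ≠ 0 := by
      intro hc0
      apply hv
      rw [← hrecv, hγv, hc0, zero_smul, Matrix.mulVec_zero]
    refine ⟨c, γ⁻¹, hcne, inv_mem hγ, ?_⟩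
    rw [← hrecv, hγv, Matrix.mulVec_smul]
  · exfalso
    apply hnd
    push_neg at H
    rw [Metric.dense_iff]
    intro w r hr
    obtain ⟨A, hA, hAb⟩ := VeechAux.orbit_close hn v H w r hr
    refine ⟨(A : Matrix (Fin 2) (Fin 2) ℝ).mulVec v, ?_, ⟨A, hA, rfl⟩⟩
    rw [Metric.mem_ball, dist_pi_lt_iff hr]
    intro b
    rw [Real.dist_eq]
    exact hAb b
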